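/- Fix ν ∈ [0,1), α > 0, ρ ∈ (0,1) and J ∈ ℤ_{>0}. Then there exist constants c > 0 and ε₀ ∈ (0,1] such that for every ε ∈ (0,ε₀], every j ∈ {0,1,…,J−1}, and every r ∈ [−π,π], the tilted step distribution f with parameters (q, ᾱ, ν, ρ), where q = e^{−ε} and ᾱ = α e^{−εj}, satisfies |Σ_{n∈ℕ} f(n) e^{i r n}| ≤ 1 − ε r²/c. -/

import Mathlib

/-- The step distribution with parameters `(q, ᾱ, ν)`:
`p(0) = 1 − ᾱ(1−q)/(1+ᾱ)` and
`p(n) = (ᾱ(1−q)(1−ν)/(1+ᾱ)²)·((ν+ᾱ)/(1+ᾱ))^{n−1}` for `n ≥ 1`. -/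
noncomputable def stepDist (q a ν : ℝ) : ℕ → ℝ := fun n =>
  if n = 0 then 1 - a * (1 - q) / (1 + a)
  else (a * (1 - q) * (1 - ν) / (1 + a) ^ 2) * ((ν + a) / (1 + a)) ^ (n - 1)

/-- The tilted step distribution with parameters `(q, ᾱ, ν, ρ)`:
`f(n) = λ ρ^n p(n)` where `γ = (1−ρ)/(1−νρ)` and `λ = (1+ᾱγ)/(1+qᾱγ)`. -/
noncomputable def tiltedStepDist (q a ν ρ : ℝ) : ℕ → ℝ := fun n =>
  ((1 + a * ((1 - ρ) / (1 - ν * ρ))) / (1 + q * a * ((1 - ρ) / (1 - ν * ρ)))) *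
    ρ ^ n * stepDist q a ν n

lemma tilted_succ (q a ν ρ : ℝ) (n : ℕ) :
    tiltedStepDist q a ν ρ (n + 1) =
      (((1 + a * ((1 - ρ) / (1 - ν * ρ))) / (1 + q * a * ((1 - ρ) / (1 - ν * ρ)))) * ρ *
        (a * (1 - q) * (1 - ν) / (1 + a) ^ 2)) * (ρ * ((ν + a) / (1 + a))) ^ n := by
  simp only [tiltedStepDist, stepDist, Nat.add_sub_cancel, if_neg (Nat.succ_ne_zero n),
    pow_succ, mul_pow]
  ring

section
variable {q a ν ρ : ℝ}

lemma tilted_summable (hq0 : 0 ≤ q) (hq1 : q ≤ 1) (ha : 0 < a) (hν0 : 0 ≤ ν) (hν1 : ν < 1)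
    (hρ0 : 0 < ρ) (hρ1 : ρ < 1) : Summable (tiltedStepDist q a ν ρ) := by
  have hβ0 : 0 ≤ ρ * ((ν + a) / (1 + a)) := by positivity
  have hβ1 : ρ * ((ν + a) / (1 + a)) < 1 := by
    have h1 : (ν + a) / (1 + a) ≤ 1 := by
      rw [div_le_one (by linarith)]; linarith
    nlinarith
  rw [← summable_nat_add_iff 1]
  simp only [tilted_succ]
  exact (summable_geometric_of_lt_one hβ0 hβ1).mul_left _

lemma tilted_tsum_eq_one (hq0 : 0 ≤ q) (hq1 : q ≤ 1) (ha : 0 < a) (hν0 : 0 ≤ ν) (hν1 : ν < 1)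
    (hρ0 : 0 < ρ) (hρ1 : ρ < 1) : ∑' n, tiltedStepDist q a ν ρ n = 1 := by
  have hβ0 : 0 ≤ ρ * ((ν + a) / (1 + a)) := by positivity
  have hβ1 : ρ * ((ν + a) / (1 + a)) < 1 := by
    have h1 : (ν + a) / (1 + a) ≤ 1 := by
      rw [div_le_one (by linarith)]; linarith
    nlinarith
  have h1a : (1 : ℝ) + a ≠ 0 := by positivity
  have hνρ : (0:ℝ) < 1 - ν * ρ := by nlinarith
  have hγ : 0 < (1 - ρ) / (1 - ν * ρ) := div_pos (by linarith) hνρ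
  have hβne : 1 - ρ * ((ν + a) / (1 + a)) ≠ 0 := by nlinarith
  rw [Summable.tsum_eq_zero_add (tilted_summable hq0 hq1 ha hν0 hν1 hρ0 hρ1)]
  simp only [tilted_succ]
  rw [tsum_mul_left, tsum_geometric_of_lt_one hβ0 hβ1]
  simp only [tiltedStepDist, stepDist, if_pos rfl, ↓reduceIte, pow_zero, mul_one]
  have h1 : 1 - ν * ρ + q * a * (1 - ρ) ≠ 0 := by
    nlinarith [mul_nonneg (mul_nonneg hq0 ha.le) (by linarith : (0:ℝ) ≤ 1 - ρ)]
  have h1' : 1 - ν * ρ + a * (1 - ρ) ≠ 0 := by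
    nlinarith [mul_nonneg ha.le (by linarith : (0:ℝ) ≤ 1 - ρ)]
  have h2 : 1 + a - ρ * (ν + a) ≠ 0 := by
    nlinarith [mul_pos ha (by linarith : (0:ℝ) < 1 - ρ)]
  have e1 : 1 + q * a * ((1 - ρ) / (1 - ν * ρ)) = (1 - ν * ρ + q * a * (1 - ρ)) / (1 - ν * ρ) := by
    rw [eq_div_iff hνρ.ne', add_mul, mul_div_assoc', div_mul_cancel₀ _ hνρ.ne']; ring
  have e2 : 1 + a * ((1 - ρ) / (1 - ν * ρ)) = (1 - ν * ρ + a * (1 - ρ)) / (1 - ν * ρ) := by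
    rw [eq_div_iff hνρ.ne', add_mul, mul_div_assoc', div_mul_cancel₀ _ hνρ.ne']; ring
  have e3 : 1 - ρ * ((ν + a) / (1 + a)) = (1 + a - ρ * (ν + a)) / (1 + a) := by
    field_simp
  rw [e1, e2, e3]
  rw [div_div_div_cancel_right₀ hνρ.ne', inv_div, div_mul_eq_mul_div, div_mul_eq_mul_div, div_mul_eq_mul_div, div_mul_div_comm, div_add_div _ _ h1 (mul_ne_zero h1 h2), div_eq_one_iff_eq (mul_ne_zero h1 (mul_ne_zero h1 h2))]
  field_simp
  ring

lemma tilted_nonneg (hq0 : 0 ≤ q) (hq1 : q ≤ 1) (ha : 0 < a) (hν0 : 0 ≤ ν) (hν1 : ν < 1)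
    (hρ0 : 0 < ρ) (hρ1 : ρ < 1) (n : ℕ) : 0 ≤ tiltedStepDist q a ν ρ n := by
  have hνρ : (0:ℝ) < 1 - ν * ρ := by nlinarith
  have hγ : 0 ≤ (1 - ρ) / (1 - ν * ρ) := div_nonneg (by linarith) hνρ.le
  have hden : (0:ℝ) < 1 + q * a * ((1 - ρ) / (1 - ν * ρ)) := by
    nlinarith [mul_nonneg (mul_nonneg hq0 ha.le) hγ]
  have hL : 0 ≤ (1 + a * ((1 - ρ) / (1 - ν * ρ))) / (1 + q * a * ((1 - ρ) / (1 - ν * ρ))) := by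
    apply div_nonneg _ hden.le
    nlinarith [mul_nonneg ha.le hγ]
  cases n with
  | zero =>
      have hp0 : 0 ≤ 1 - a * (1 - q) / (1 + a) := by
        have h : a * (1 - q) / (1 + a) ≤ 1 := by
          rw [div_le_one (by linarith)]; nlinarith
        linarith
      have : tiltedStepDist q a ν ρ 0 = ((1 + a * ((1 - ρ) / (1 - ν * ρ))) /
          (1 + q * a * ((1 - ρ) / (1 - ν * ρ)))) * (1 - a * (1 - q) / (1 + a)) := by
        simp [tiltedStepDist, stepDist]
      rw [this]
      exact mul_nonneg hL hp0
  | succ n =>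
      rw [tilted_succ]
      have hA : 0 ≤ a * (1 - q) * (1 - ν) / (1 + a) ^ 2 := by
        apply div_nonneg _ (by positivity)
        nlinarith [mul_nonneg ha.le (by linarith : (0:ℝ) ≤ 1 - q)]
      exact mul_nonneg (mul_nonneg (mul_nonneg hL hρ0.le) hA)
        (pow_nonneg (mul_nonneg hρ0.le (div_nonneg (by linarith) (by linarith))) n)

lemma abs_two_term_aux (f0 f1 r : ℝ) (hf0 : 0 ≤ f0) (hf1 : 0 ≤ f1) (hle : f0 + f1 ≤ 1) :
    ‖(f0 : ℂ) + (f1 : ℂ) * Complex.exp (Complex.I * r)‖ ≤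
      f0 + f1 - f0 * f1 * (1 - Real.cos r) := by
  have hc1 : Real.cos r ≤ 1 := Real.cos_le_one r
  have hc2 : -1 ≤ Real.cos r := Real.neg_one_le_cos r
  have ht : 0 ≤ f0 + f1 - f0 * f1 * (1 - Real.cos r) := by
    nlinarith [mul_nonneg hf0 (by linarith : (0:ℝ) ≤ 1 - f1),
      mul_nonneg hf1 (by linarith : (0:ℝ) ≤ 1 - f0),
      mul_nonneg (mul_nonneg hf0 hf1) (by linarith : (0:ℝ) ≤ 1 + Real.cos r)]
  have hIr : Complex.I * r = (r : ℂ) * Complex.I := by ring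
  have hz : (f0 : ℂ) + (f1 : ℂ) * Complex.exp (Complex.I * r)
      = ((f0 + f1 * Real.cos r : ℝ) : ℂ) + ((f1 * Real.sin r : ℝ) : ℂ) * Complex.I := by
    rw [hIr, Complex.exp_mul_I]
    push_cast [Complex.ofReal_cos, Complex.ofReal_sin]
    ring
  rw [hz, Complex.norm_add_mul_I]
  have hX : (f0 + f1 * Real.cos r) ^ 2 + (f1 * Real.sin r) ^ 2
      = f0 ^ 2 + f1 ^ 2 + 2 * f0 * f1 * Real.cos r := by
    linear_combination f1 ^ 2 * Real.sin_sq_add_cos_sq r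
  have hsq : (f0 + f1 * Real.cos r) ^ 2 + (f1 * Real.sin r) ^ 2
      ≤ (f0 + f1 - f0 * f1 * (1 - Real.cos r)) ^ 2 := by
    rw [hX]
    nlinarith [sq_nonneg (f0 * f1 * (1 - Real.cos r)),
      mul_nonneg (mul_nonneg (mul_nonneg hf0 hf1) (by linarith : (0:ℝ) ≤ 1 - Real.cos r))
        (by linarith : (0:ℝ) ≤ 1 - f0 - f1)]
  calc Real.sqrt ((f0 + f1 * Real.cos r) ^ 2 + (f1 * Real.sin r) ^ 2)
      ≤ Real.sqrt ((f0 + f1 - f0 * f1 * (1 - Real.cos r)) ^ 2) := Real.sqrt_le_sqrt hsq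
    _ = f0 + f1 - f0 * f1 * (1 - Real.cos r) := Real.sqrt_sq ht

set_option maxHeartbeats 1000000 in
lemma tilted_charFun_le (hq0 : 0 ≤ q) (hq1 : q ≤ 1) (ha : 0 < a) (hν0 : 0 ≤ ν) (hν1 : ν < 1)
    (hρ0 : 0 < ρ) (hρ1 : ρ < 1) (r : ℝ) (hr : |r| ≤ Real.pi) :
    ‖∑' n : ℕ, (tiltedStepDist q a ν ρ n : ℂ) * Complex.exp (Complex.I * r * n)‖ ≤
      1 - tiltedStepDist q a ν ρ 0 * tiltedStepDist q a ν ρ 1 *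
        (2 / Real.pi ^ 2 * r ^ 2) := by
  set f := tiltedStepDist q a ν ρ with hfdef
  have hnn : ∀ n, 0 ≤ f n := tilted_nonneg hq0 hq1 ha hν0 hν1 hρ0 hρ1
  have hsum : Summable f := tilted_summable hq0 hq1 ha hν0 hν1 hρ0 hρ1
  have htsum : ∑' n, f n = 1 := tilted_tsum_eq_one hq0 hq1 ha hν0 hν1 hρ0 hρ1
  set g : ℕ → ℂ := fun n => (f n : ℂ) * Complex.exp (Complex.I * r * n) with hgdef
  have hgnorm : ∀ n, ‖g n‖ = f n := by
    intro n
    have h : Complex.I * r * n = ((r * n : ℝ) : ℂ) * Complex.I := by push_cast; ring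
    rw [hgdef]
    simp only [norm_mul, h, Complex.norm_real, Real.norm_eq_abs,
      Complex.norm_exp_ofReal_mul_I, mul_one, abs_of_nonneg (hnn n)]
  have hgsum : Summable g := by
    apply Summable.of_norm
    simpa only [hgnorm] using hsum
  have hgsum1 : Summable (fun n => g (n + 1)) := (summable_nat_add_iff 1).2 hgsum
  have hfsum1 : Summable (fun n => f (n + 1)) := (summable_nat_add_iff 1).2 hsum
  have hfsum2 : Summable (fun n => f (n + 1 + 1)) := (summable_nat_add_iff 1).2 hfsum1
  rw [Summable.tsum_eq_zero_add hsum, Summable.tsum_eq_zero_add hfsum1] at htsum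
  have hT : ∑' n, f (n + 1 + 1) = 1 - f 0 - f (0 + 1) := by linarith
  have hTnn : 0 ≤ ∑' n, f (n + 1 + 1) := tsum_nonneg fun n => hnn _
  have hle1 : f 0 + f (0 + 1) ≤ 1 := by linarith
  rw [Summable.tsum_eq_zero_add hgsum, Summable.tsum_eq_zero_add hgsum1]
  have hg0 : g 0 = (f 0 : ℂ) := by simp [hgdef]
  have hg1 : g (0 + 1) = (f (0 + 1) : ℂ) * Complex.exp (Complex.I * r) := by
    simp [hgdef]
  have htail : ‖∑' n, g (n + 1 + 1)‖ ≤ 1 - f 0 - f (0 + 1) := by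
    calc ‖∑' n, g (n + 1 + 1)‖ = ‖∑' n, g (n + 1 + 1)‖ := rfl
      _ ≤ ∑' n, ‖g (n + 1 + 1)‖ := norm_tsum_le_tsum_norm (by simpa only [hgnorm] using hfsum2)
      _ = ∑' n, f (n + 1 + 1) := by simp only [hgnorm]
      _ = 1 - f 0 - f (0 + 1) := hT
  have hkey := abs_two_term_aux (f 0) (f (0 + 1)) r (hnn 0) (hnn (0 + 1)) hle1
  have hcos := Real.cos_le_one_sub_mul_cos_sq hr
  have h2r : 2 / Real.pi ^ 2 * r ^ 2 ≤ 1 - Real.cos r := by linarith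
  calc ‖g 0 + (g (0 + 1) + ∑' n, g (n + 1 + 1))‖
      ≤ ‖g 0 + g (0 + 1)‖ + ‖∑' n, g (n + 1 + 1)‖ := by
        rw [← add_assoc]; exact norm_add_le _ _
    _ ≤ (f 0 + f (0 + 1) - f 0 * f (0 + 1) * (1 - Real.cos r)) + (1 - f 0 - f (0 + 1)) := by
        apply add_le_add _ htail
        rw [hg0, hg1]; exact hkey
    _ = 1 - f 0 * f (0 + 1) * (1 - Real.cos r) := by ring
    _ ≤ 1 - f 0 * f (0 + 1) * (2 / Real.pi ^ 2 * r ^ 2) := by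
        have := mul_le_mul_of_nonneg_left h2r (mul_nonneg (hnn 0) (hnn (0 + 1)))
        linarith
    _ = 1 - f 0 * f 1 * (2 / Real.pi ^ 2 * r ^ 2) := by norm_num

end

set_option maxHeartbeats 1000000 in
theorem tiltedStepDist_charFun_decay (ν α ρ : ℝ) (J : ℕ)
    (hν0 : 0 ≤ ν) (hν1 : ν < 1) (hα : 0 < α) (hρ0 : 0 < ρ) (hρ1 : ρ < 1) (hJ : 0 < J) :
    ∃ c : ℝ, 0 < c ∧ ∃ ε₀ : ℝ, ε₀ ∈ Set.Ioc (0 : ℝ) 1 ∧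
      ∀ ε ∈ Set.Ioc (0 : ℝ) ε₀, ∀ j < J, ∀ r ∈ Set.Icc (-Real.pi) Real.pi,
        ‖(∑' n : ℕ,
            (tiltedStepDist (Real.exp (-ε)) (α * Real.exp (-ε * j)) ν ρ n : ℂ) *
              Complex.exp (Complex.I * r * n))‖ ≤ 1 - ε * r ^ 2 / c := by
  have hπ := Real.pi_pos
  set K := Real.exp (-1) * ρ * α * Real.exp (-(J : ℝ)) * (1 - ν) / (2 * (1 + α) ^ 2) with hKdef
  have hK : 0 < K := by
    apply div_pos _ (by positivity)
    have e1 := Real.exp_pos (-1 : ℝ)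
    have e2 := Real.exp_pos (-(J : ℝ))
    nlinarith [mul_pos (mul_pos (mul_pos (mul_pos e1 hρ0) hα) e2)
      (by linarith : (0:ℝ) < 1 - ν)]
  refine ⟨Real.pi ^ 2 / (2 * K), by positivity, 1, ⟨one_pos, le_refl 1⟩, ?_⟩
  intro ε hε j hj r hr
  obtain ⟨hε0, hε1⟩ := hε
  set q := Real.exp (-ε) with hqdef
  set a := α * Real.exp (-ε * j) with hadef
  have hq0 : 0 < q := Real.exp_pos _
  have hq1 : q ≤ 1 := by
    rw [hqdef, ← Real.exp_zero]
    exact Real.exp_le_exp.2 (by linarith)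
  have haa : 0 < a := mul_pos hα (Real.exp_pos _)
  have hrabs : |r| ≤ Real.pi := abs_le.2 ⟨hr.1, hr.2⟩
  have hmain := tilted_charFun_le hq0.le hq1 haa hν0 hν1 hρ0 hρ1 r hrabs
  refine le_trans hmain ?_
  set f0 := tiltedStepDist q a ν ρ 0 with hf0def
  set f1 := tiltedStepDist q a ν ρ 1 with hf1def
  -- basic positivity facts
  have hνρ : (0:ℝ) < 1 - ν * ρ := by nlinarith
  have hγ : 0 < (1 - ρ) / (1 - ν * ρ) := div_pos (by linarith) hνρ
  have hLden : (0:ℝ) < 1 + q * a * ((1 - ρ) / (1 - ν * ρ)) := by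
    nlinarith [mul_pos (mul_pos hq0 haa) hγ]
  have hL1 : 1 ≤ (1 + a * ((1 - ρ) / (1 - ν * ρ))) / (1 + q * a * ((1 - ρ) / (1 - ν * ρ))) := by
    rw [le_div_iff₀ hLden]
    nlinarith [mul_nonneg (mul_nonneg (by linarith : (0:ℝ) ≤ 1 - q) haa.le) hγ.le]
  -- lower bound for f0
  have hp0q : q ≤ 1 - a * (1 - q) / (1 + a) := by
    have h : a * (1 - q) / (1 + a) ≤ 1 - q := by
      rw [div_le_iff₀ (by linarith)]
      nlinarith
    linarith
  have hf0eq : f0 = ((1 + a * ((1 - ρ) / (1 - ν * ρ))) /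
      (1 + q * a * ((1 - ρ) / (1 - ν * ρ)))) * (1 - a * (1 - q) / (1 + a)) := by
    simp [hf0def, tiltedStepDist, stepDist]
  have hf0 : Real.exp (-1) ≤ f0 := by
    have hq_ge : Real.exp (-1) ≤ q := Real.exp_le_exp.2 (by linarith)
    have hp0nn : 0 ≤ 1 - a * (1 - q) / (1 + a) := le_trans hq0.le hp0q
    calc Real.exp (-1) ≤ q := hq_ge
      _ ≤ 1 - a * (1 - q) / (1 + a) := hp0q
      _ ≤ f0 := by rw [hf0eq]; nlinarith [mul_nonneg (by linarith : (0:ℝ) ≤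
          (1 + a * ((1 - ρ) / (1 - ν * ρ))) / (1 + q * a * ((1 - ρ) / (1 - ν * ρ))) - 1) hp0nn]
  -- lower bound for f1
  have hf1eq : f1 = ((1 + a * ((1 - ρ) / (1 - ν * ρ))) /
      (1 + q * a * ((1 - ρ) / (1 - ν * ρ)))) * ρ * (a * (1 - q) * (1 - ν) / (1 + a) ^ 2) := by
    have h := tilted_succ q a ν ρ 0
    simpa using h
  have halow : α * Real.exp (-(J : ℝ)) ≤ a := by
    rw [hadef]
    have hjJ : (j : ℝ) < J := by exact_mod_cast hj
    have hexp : Real.exp (-(J : ℝ)) ≤ Real.exp (-ε * j) := Real.exp_le_exp.2 (by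
      nlinarith [mul_nonneg (by linarith : (0:ℝ) ≤ 1 - ε) (Nat.cast_nonneg j : (0:ℝ) ≤ j)])
    exact mul_le_mul_of_nonneg_left hexp hα.le
  have haup : a ≤ α := by
    rw [hadef]
    have : Real.exp (-ε * j) ≤ 1 := by
      rw [← Real.exp_zero]
      apply Real.exp_le_exp.2
      nlinarith [(Nat.cast_nonneg j : (0:ℝ) ≤ j), hε0.le]
    nlinarith
  have h1q2 : ε / 2 ≤ 1 - q := by
    have hqe : q * Real.exp ε = 1 := by rw [hqdef, ← Real.exp_add]; norm_num
    have h2 : q * (ε + 1) ≤ 1 := by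
      calc q * (ε + 1) ≤ q * Real.exp ε :=
            mul_le_mul_of_nonneg_left (Real.add_one_le_exp ε) hq0.le
        _ = 1 := hqe
    nlinarith [mul_nonneg (by linarith : (0:ℝ) ≤ 1 - q) (by linarith : (0:ℝ) ≤ 1 - ε)]
  have hB : α * Real.exp (-(J : ℝ)) * (ε / 2) * (1 - ν) / (1 + α) ^ 2 ≤
      a * (1 - q) * (1 - ν) / (1 + a) ^ 2 := by
    rw [div_le_div_iff₀ (by positivity) (by positivity)]
    have hNN : α * Real.exp (-(J : ℝ)) * (ε / 2) * (1 - ν) ≤ a * (1 - q) * (1 - ν) := by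
      apply mul_le_mul_of_nonneg_right _ (by linarith : (0:ℝ) ≤ 1 - ν)
      apply mul_le_mul halow h1q2 (by positivity) haa.le
    have hDD : (1 + a) ^ 2 ≤ (1 + α) ^ 2 := by nlinarith
    exact mul_le_mul hNN hDD (by positivity)
      (mul_nonneg (mul_nonneg haa.le (by linarith)) (by linarith))
  have hAnn : 0 ≤ a * (1 - q) * (1 - ν) / (1 + a) ^ 2 :=
    div_nonneg (mul_nonneg (mul_nonneg haa.le (by linarith)) (by linarith)) (by positivity)
  have hρB : ρ * (α * Real.exp (-(J : ℝ)) * (ε / 2) * (1 - ν) / (1 + α) ^ 2) ≤ f1 := by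
    rw [hf1eq]
    calc ρ * (α * Real.exp (-(J : ℝ)) * (ε / 2) * (1 - ν) / (1 + α) ^ 2)
        ≤ ρ * (a * (1 - q) * (1 - ν) / (1 + a) ^ 2) := mul_le_mul_of_nonneg_left hB hρ0.le
      _ ≤ ((1 + a * ((1 - ρ) / (1 - ν * ρ))) / (1 + q * a * ((1 - ρ) / (1 - ν * ρ)))) * ρ *
            (a * (1 - q) * (1 - ν) / (1 + a) ^ 2) := by
          nlinarith [mul_nonneg (mul_nonneg (by linarith : (0:ℝ) ≤
            (1 + a * ((1 - ρ) / (1 - ν * ρ))) / (1 + q * a * ((1 - ρ) / (1 - ν * ρ))) - 1)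
            hρ0.le) hAnn]
  have hεK : ε * K ≤ f0 * f1 := by
    have h1 : ε * K = Real.exp (-1) *
        (ρ * (α * Real.exp (-(J : ℝ)) * (ε / 2) * (1 - ν) / (1 + α) ^ 2)) := by
      rw [hKdef]; field_simp
    rw [h1]
    have hρBnn : 0 ≤ ρ * (α * Real.exp (-(J : ℝ)) * (ε / 2) * (1 - ν) / (1 + α) ^ 2) :=
      mul_nonneg hρ0.le (div_nonneg (mul_nonneg (mul_nonneg
        (mul_nonneg hα.le (Real.exp_pos _).le) (by linarith)) (by linarith)) (by positivity))
    exact mul_le_mul hf0 hρB hρBnn (le_trans (Real.exp_pos _).le hf0)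
  have hdiv : ε * r ^ 2 / (Real.pi ^ 2 / (2 * K)) = ε * K * (2 / Real.pi ^ 2 * r ^ 2) := by
    field_simp
  rw [hdiv]
  have hfinal : ε * K * (2 / Real.pi ^ 2 * r ^ 2) ≤ f0 * f1 * (2 / Real.pi ^ 2 * r ^ 2) :=
    mul_le_mul_of_nonneg_right hεK (by positivity)
  linarith
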